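/- Suppose F ⊆ binom([n],k) is a nontrivial r-wise t-intersecting family with r ≥ 3 (nontrivial means |∩_{F∈F} F| < t). Then F is 2-wise (t+r−2)-intersecting, i.e., |A ∩ B| ≥ t + r − 2 for all A, B ∈ F. -/

import Mathlib

lemma foldr_inter_subset {x A : Finset ℕ} :
    ∀ (l : List (Finset ℕ)), x ⊆ A → (∀ X ∈ l, x ⊆ X) → x ⊆ l.foldr (· ∩ ·) A
  | [], hA, _ => hA
  | B :: l, hA, h =>
      Finset.subset_inter (h B (by simp))
        (foldr_inter_subset l hA (fun X hX => h X (by simp [hX])))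

theorem stmt_15 (n k r t : ℕ) (hr : 3 ≤ r) (ht : 1 ≤ t) (F : Finset (Finset ℕ))
    (hne : F.Nonempty)
    (hsub : ∀ A ∈ F, A ⊆ Finset.Icc 1 n) (hcard : ∀ A ∈ F, A.card = k)
    (hint : ∀ f : Fin r → Finset ℕ, (∀ i, f i ∈ F) →
      t ≤ (Finset.univ.inf' ⟨⟨0, by omega⟩, Finset.mem_univ _⟩ f).card)
    (hnontriv : (F.inf' hne id).card < t) :
    ∀ A ∈ F, ∀ B ∈ F, t + r - 2 ≤ (A ∩ B).card := by
  have key : ∀ d : ℕ, d ≤ r - 2 → ∀ A ∈ F, ∀ l : List (Finset ℕ),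
      (∀ X ∈ l, X ∈ F) → l.length + 1 = r - d → t + d ≤ (l.foldr (· ∩ ·) A).card := by
    intro d
    induction d with
    | zero =>
      intro _ A hA l hl hlen
      simp only [Nat.sub_zero] at hlen
      let f : Fin r → Finset ℕ := fun i =>
        if h : i.val = 0 then A else l.get ⟨i.val - 1, by have := i.isLt; omega⟩
      have hf : ∀ i, f i ∈ F := by
        intro i
        by_cases h : i.val = 0
        · simp [f, h, hA]
        · simp only [f, dif_neg h]
          exact hl _ (List.get_mem _ _)
      have h1 := hint f hf
      simp only [Nat.add_zero]
      refine le_trans h1 (Finset.card_le_card ?_)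
      apply foldr_inter_subset
      · have h0 := Finset.inf'_le f
          (Finset.mem_univ (⟨0, by omega⟩ : Fin r))
        simpa [f] using h0
      · intro X hX
        obtain ⟨i, hi⟩ := List.mem_iff_get.mp hX
        have h2 : f ⟨i.val + 1, by have := i.isLt; omega⟩ = l.get i := by
          simp only [f]
          rw [dif_neg (by simp)]
          have he : (⟨i.val + 1 - 1, by have := i.isLt; omega⟩ : Fin l.length) = i :=
            Fin.ext (by simp)
          rw [he]
        have h3 := Finset.inf'_le f
          (Finset.mem_univ (⟨i.val + 1, by have := i.isLt; omega⟩ : Fin r))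
        rw [h2, hi] at h3
        exact h3
    | succ d ih =>
      intro hd A hA l hl hlen
      set S := l.foldr (· ∩ ·) A with hS
      have hstep : ∀ G ∈ F, t + d ≤ (G ∩ S).card := by
        intro G hG
        have := ih (by omega) A hA (G :: l)
          (by intro X hX; rcases List.mem_cons.mp hX with h | h
              · exact h ▸ hG
              · exact hl X h)
          (by simp only [List.length_cons]; omega)
        simpa [hS] using this
      by_contra hcon
      push_neg at hcon
      have hScard : S.card ≤ t + d := by omega
      have hall : ∀ G ∈ F, S ⊆ G := by
        intro G hG
        have h1 := hstep G hG
        have h2 : G ∩ S ⊆ S := Finset.inter_subset_right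
        have h3 : G ∩ S = S :=
          Finset.eq_of_subset_of_card_le h2 (le_trans hScard h1)
        intro x hx
        exact (Finset.mem_inter.mp (h3 ▸ hx)).1
      have hsub2 : S ⊆ F.inf' hne id := Finset.le_inf' hne id hall
      have hSt : t ≤ S.card := by
        have h1 := hstep A hA
        have h2 : (A ∩ S).card ≤ S.card :=
          Finset.card_le_card Finset.inter_subset_right
        omega
      have : t ≤ (F.inf' hne id).card :=
        le_trans hSt (Finset.card_le_card hsub2)
      omega
  intro A hA B hB
  have h := key (r - 2) (le_refl _) A hA [B]
    (by intro X hX; simp at hX; exact hX ▸ hB)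
    (by simp only [List.length_cons, List.length_nil]; omega)
  have heq : (B ∩ A).card = (A ∩ B).card := by rw [Finset.inter_comm]
  simp only [List.foldr_cons, List.foldr_nil] at h
  omega
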